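/- Let d ≥ 1, let α be a real algebraic number of degree d+1, and let ε > 0. Assume the p-adic Schmidt subspace theorem consequence: all but finitely many nonzero integer polynomials P(X) = a_0 + a_1 X + ... + a_d X^d of degree at most d with a_0 ≠ 0 satisfy |P(α)|·|a_0|_p ≥ H(P)^{−d−ε}. Then for every real algebraic number ξ of degree at most d with sufficiently large height, |α − ξ| · min{|Norm(ξ)|_p, 1} ≥ H(ξ)^{−d−1−2ε}. -/

import Mathlib

/-- Naive height of an integer polynomial: max of absolute values of coefficients. -/
def intPolyHeight (P : Polynomial ℤ) : ℕ :=
  P.support.sup fun k => (P.coeff k).natAbs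

lemma coeff_le_height (P : Polynomial ℤ) (k : ℕ) : (P.coeff k).natAbs ≤ intPolyHeight P := by
  by_cases h : k ∈ P.support
  · exact Finset.le_sup (f := fun k => (P.coeff k).natAbs) h
  · simp [Polynomial.notMem_support_iff.mp h]

lemma one_le_height {P : Polynomial ℤ} (hP : P ≠ 0) : 1 ≤ intPolyHeight P := by
  obtain ⟨k, hk⟩ := Polynomial.support_nonempty.mpr hP
  have h1 : 1 ≤ (P.coeff k).natAbs :=
    Nat.one_le_iff_ne_zero.mpr (Int.natAbs_ne_zero.mpr (Polynomial.mem_support_iff.mp hk))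
  exact h1.trans (coeff_le_height P k)

lemma padicNorm_int_lower (p : ℕ) [Fact p.Prime] (z : ℤ) (hz : z ≠ 0) :
    ((z.natAbs : ℚ))⁻¹ ≤ padicNorm p z := by
  have hq : (z : ℚ) ≠ 0 := Int.cast_ne_zero.mpr hz
  rw [padicNorm.eq_zpow_of_nonzero hq, padicValRat.of_int]
  have hdvd : p ^ padicValInt p z ∣ z.natAbs := pow_padicValNat_dvd
  have hle : p ^ padicValInt p z ≤ z.natAbs :=
    Nat.le_of_dvd (Int.natAbs_pos.mpr hz) hdvd
  have hp0 : (0:ℚ) < (p:ℚ) := by exact_mod_cast (Fact.out : p.Prime).pos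
  have hppos : (0:ℚ) < (p:ℚ) ^ padicValInt p z := by positivity
  rw [zpow_neg, zpow_natCast]
  apply inv_anti₀ hppos
  exact_mod_cast hle

lemma abs_pow_sub_pow_le' (x y M : ℝ) (hM : 1 ≤ M) (hx : |x| ≤ M) (hy : |y| ≤ M) :
    ∀ k : ℕ, |x ^ k - y ^ k| ≤ k * M ^ k * |x - y| := by
  intro k; induction k with
  | zero => simp
  | succ k ih =>
    have h1 : x ^ (k+1) - y ^ (k+1) = x ^ k * (x - y) + y * (x ^ k - y ^ k) := by ring
    have h2 : |x ^ (k+1) - y ^ (k+1)| ≤ |x| ^ k * |x - y| + |y| * |x ^ k - y ^ k| := by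
      rw [h1]
      calc |x ^ k * (x - y) + y * (x ^ k - y ^ k)|
          ≤ |x ^ k * (x - y)| + |y * (x ^ k - y ^ k)| := abs_add_le _ _
        _ = |x| ^ k * |x - y| + |y| * |x ^ k - y ^ k| := by rw [abs_mul, abs_mul, abs_pow]
    have hMk : (0:ℝ) < M ^ k := by positivity
    have hxk : |x| ^ k ≤ M ^ k := pow_le_pow_left₀ (abs_nonneg x) hx k
    have habs : (0:ℝ) ≤ |x - y| := abs_nonneg _
    have h3 : |y| * |x ^ k - y ^ k| ≤ M * (k * M ^ k * |x - y|) := by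
      have := abs_nonneg (x ^ k - y ^ k)
      nlinarith
    have h4 : |x| ^ k * |x - y| ≤ M ^ k * |x - y| := by nlinarith
    calc |x ^ (k+1) - y ^ (k+1)| ≤ |x| ^ k * |x - y| + |y| * |x ^ k - y ^ k| := h2
      _ ≤ M ^ k * |x - y| + M * (↑k * M ^ k * |x - y|) := add_le_add h4 h3
      _ ≤ M ^ (k+1) * |x - y| + ↑k * M ^ (k+1) * |x - y| := by
          rw [pow_succ]; nlinarith [mul_nonneg (mul_nonneg hMk.le habs) (sub_nonneg.mpr hM)]
      _ = (↑(k+1) : ℝ) * M ^ (k+1) * |x - y| := by push_cast; ring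

lemma coeff_zero_ne_zero {P : Polynomial ℤ} (hP : Irreducible P) {ξ : ℝ}
    (hξ : ξ ≠ 0) (hroot : Polynomial.aeval ξ P = 0) : P.coeff 0 ≠ 0 := by
  intro h0
  obtain ⟨Q, hQ⟩ := Polynomial.X_dvd_iff.mpr h0
  rcases hP.isUnit_or_isUnit hQ with h | h
  · exact Polynomial.not_isUnit_X h
  · obtain ⟨u, hu, hCu⟩ := Polynomial.isUnit_iff.mp h
    rw [hQ, ← hCu, map_mul, Polynomial.aeval_X, Polynomial.aeval_C] at hroot
    have hu0 : (algebraMap ℤ ℝ) u ≠ 0 := by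
      simpa using hu.ne_zero
    rcases mul_eq_zero.mp hroot with h | h
    · exact hξ h
    · exact hu0 h

lemma padicNorm_coeff0_le_norm (p : ℕ) [Fact p.Prime] (P : Polynomial ℤ)
    (han : P.coeff P.natDegree ≠ 0) :
    padicNorm p (P.coeff 0 : ℚ) ≤
      padicNorm p ((-1:ℚ) ^ P.natDegree * (P.coeff 0 : ℚ) / (P.coeff P.natDegree : ℚ)) := by
  have h1 : padicNorm p ((-1:ℚ) ^ P.natDegree * (P.coeff 0 : ℚ) / (P.coeff P.natDegree : ℚ))
      = padicNorm p (P.coeff 0 : ℚ) / padicNorm p (P.coeff P.natDegree : ℚ) := by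
    rcases Nat.even_or_odd P.natDegree with h | h
    · rw [h.neg_one_pow, one_mul, padicNorm.div]
    · rw [h.neg_one_pow, neg_one_mul, neg_div, padicNorm.neg, padicNorm.div]
  rw [h1]
  have hanq : (P.coeff P.natDegree : ℚ) ≠ 0 := Int.cast_ne_zero.mpr han
  have hpos : 0 < padicNorm p (P.coeff P.natDegree : ℚ) :=
    lt_of_le_of_ne (padicNorm.nonneg _) (Ne.symm (padicNorm.nonzero hanq))
  rw [le_div_iff₀ hpos]
  calc padicNorm p (P.coeff 0 : ℚ) * padicNorm p (P.coeff P.natDegree : ℚ)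
      ≤ padicNorm p (P.coeff 0 : ℚ) * 1 :=
        mul_le_mul_of_nonneg_left (padicNorm.of_int _) (padicNorm.nonneg _)
    _ = padicNorm p (P.coeff 0 : ℚ) := mul_one _

lemma eval_diff_bound (P : Polynomial ℤ) (x y M : ℝ) (hM : 1 ≤ M) (hx : |x| ≤ M) (hy : |y| ≤ M)
    (d : ℕ) (hdeg : P.natDegree ≤ d) :
    |Polynomial.aeval x P - Polynomial.aeval y P|
      ≤ ((d:ℝ)+1) * ((intPolyHeight P : ℝ) * ((d:ℝ) * M ^ d * |x - y|)) := by
  have hsum : Polynomial.aeval x P - Polynomial.aeval y P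
      = ∑ i ∈ Finset.range (P.natDegree + 1), (P.coeff i : ℝ) * (x ^ i - y ^ i) := by
    rw [Polynomial.aeval_eq_sum_range x, Polynomial.aeval_eq_sum_range y,
      ← Finset.sum_sub_distrib]
    apply Finset.sum_congr rfl
    intro i _
    rw [zsmul_eq_mul, zsmul_eq_mul]; ring
  rw [hsum]
  set B : ℝ := (intPolyHeight P : ℝ) * ((d:ℝ) * M ^ d * |x - y|) with hB
  have hterm : ∀ i ∈ Finset.range (P.natDegree + 1),
      |(P.coeff i : ℝ) * (x ^ i - y ^ i)| ≤ B := by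
    intro i hi
    have hi' : i ≤ d := le_trans (Nat.lt_succ_iff.mp (Finset.mem_range.mp hi)) hdeg
    have hc : |(P.coeff i : ℝ)| ≤ (intPolyHeight P : ℝ) := by
      rw [← Int.cast_abs, Int.abs_eq_natAbs]
      exact_mod_cast coeff_le_height P i
    have hpow : |x ^ i - y ^ i| ≤ (d:ℝ) * M ^ d * |x - y| := by
      have h1 := abs_pow_sub_pow_le' x y M hM hx hy i
      have h2 : (i:ℝ) ≤ (d:ℝ) := Nat.cast_le.mpr hi'
      have h3 : M ^ i ≤ M ^ d := pow_le_pow_right₀ hM hi'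
      have h4 : (0:ℝ) ≤ M ^ i := by positivity
      have h5 : (0:ℝ) ≤ |x - y| := abs_nonneg _
      have h7 : (i:ℝ) * M ^ i ≤ (d:ℝ) * M ^ d :=
        mul_le_mul h2 h3 h4 (Nat.cast_nonneg d)
      exact le_trans h1 (mul_le_mul_of_nonneg_right h7 h5)
    rw [abs_mul, hB]
    exact mul_le_mul hc hpow (abs_nonneg _) (Nat.cast_nonneg _)
  have hB0 : 0 ≤ B := by
    have : (0:ℝ) ≤ M ^ d := by positivity
    have h5 : (0:ℝ) ≤ |x - y| := abs_nonneg _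
    positivity
  calc |∑ i ∈ Finset.range (P.natDegree + 1), (P.coeff i : ℝ) * (x ^ i - y ^ i)|
      ≤ ∑ i ∈ Finset.range (P.natDegree + 1), |(P.coeff i : ℝ) * (x ^ i - y ^ i)| :=
        Finset.abs_sum_le_sum_abs _ _
    _ ≤ (Finset.range (P.natDegree + 1)).card • B := Finset.sum_le_card_nsmul _ _ B hterm
    _ = ((P.natDegree + 1 : ℕ) : ℝ) * B := by rw [Finset.card_range, nsmul_eq_mul]
    _ ≤ ((d:ℝ)+1) * B := by
        apply mul_le_mul_of_nonneg_right _ hB0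
        push_cast
        have : (P.natDegree : ℝ) ≤ (d : ℝ) := Nat.cast_le.mpr hdeg
        linarith

/-- Let `α` be a real algebraic number of degree `d+1` and `ε > 0`.
Assume (a consequence of the `p`-adic Schmidt subspace theorem) that all but
finitely many nonzero integer polynomials `P` of degree at most `d` with
`P(0) ≠ 0` satisfy `|P(α)|·|P(0)|_p ≥ H(P)^{−d−ε}`.  Then every nonzero real
algebraic number `ξ` of degree at most `d` of sufficiently large height, with
minimal defining polynomial `P` over `ℤ`, satisfies
`|α − ξ| · min{|Norm(ξ)|_p, 1} ≥ H(ξ)^{−d−1−2ε}`. -/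
theorem stmt18 (p : ℕ) [hp : Fact p.Prime] (d : ℕ) (hd : 1 ≤ d)
    (α : ℝ) (hα : (minpoly ℚ α).natDegree = d + 1)
    (ε : ℝ) (hε : 0 < ε)
    (hSchmidt : ∃ S : Finset (Polynomial ℤ), ∀ P : Polynomial ℤ,
      P ≠ 0 → P.natDegree ≤ d → P.coeff 0 ≠ 0 → P ∉ S →
      (intPolyHeight P : ℝ) ^ (-(d : ℝ) - ε)
        ≤ |Polynomial.aeval α P| * (padicNorm p (P.coeff 0 : ℚ) : ℝ)) :
    ∃ H₀ : ℕ, ∀ ξ : ℝ, ξ ≠ 0 → ∀ P : Polynomial ℤ,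
      Irreducible P → P.natDegree ≤ d → Polynomial.aeval ξ P = 0 →
      H₀ ≤ intPolyHeight P →
      (intPolyHeight P : ℝ) ^ (-(d : ℝ) - 1 - 2 * ε)
        ≤ |α - ξ| * min ((padicNorm p ((-1 : ℚ) ^ P.natDegree
            * (P.coeff 0 : ℚ) / (P.coeff P.natDegree : ℚ)) : ℝ)) 1 := by
  obtain ⟨S, hS⟩ := hSchmidt
  set M : ℝ := 1 + |α| with hMdef
  have hM1 : (1:ℝ) ≤ M := le_add_of_nonneg_right (abs_nonneg α)
  set C : ℝ := ((d:ℝ)+1) * ((d:ℝ) * M ^ d) with hCdef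
  have hd1 : (1:ℝ) ≤ (d:ℝ) := by exact_mod_cast hd
  have hC0 : (0:ℝ) < C := by
    have hMd : (0:ℝ) < M ^ d := by positivity
    apply mul_pos (by linarith) (mul_pos (by linarith) hMd)
  refine ⟨max (max (S.sup intPolyHeight + 1) 2) (⌈C ^ (ε⁻¹)⌉₊ + 1), ?_⟩
  intro ξ hξ P hPirr hPdeg hroot hHle
  set H : ℕ := intPolyHeight P with hHdef
  have hP0 : P ≠ 0 := hPirr.ne_zero
  have ha0 : P.coeff 0 ≠ 0 := coeff_zero_ne_zero hPirr hξ hroot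
  have han : P.coeff P.natDegree ≠ 0 := fun h => hP0 (Polynomial.leadingCoeff_eq_zero.mp h)
  have hH1 : 1 ≤ H := one_le_height hP0
  have hHR1 : (1:ℝ) ≤ (H:ℝ) := by exact_mod_cast hH1
  have hHR0 : (0:ℝ) < (H:ℝ) := lt_of_lt_of_le one_pos hHR1
  set m : ℝ := min ((padicNorm p ((-1 : ℚ) ^ P.natDegree
      * (P.coeff 0 : ℚ) / (P.coeff P.natDegree : ℚ)) : ℝ)) 1 with hm
  have hmin : (padicNorm p (P.coeff 0 : ℚ) : ℝ) ≤ m := by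
    apply le_min
    · exact_mod_cast padicNorm_coeff0_le_norm p P han
    · exact_mod_cast padicNorm.of_int (p := p) (P.coeff 0)
  have hmin0 : (0:ℝ) ≤ m :=
    le_min (by exact_mod_cast padicNorm.nonneg _) zero_le_one
  have hlow : (H:ℝ)⁻¹ ≤ (padicNorm p (P.coeff 0 : ℚ) : ℝ) := by
    have h1 := padicNorm_int_lower p (P.coeff 0) ha0
    have h2 : ((P.coeff 0).natAbs : ℚ) ≤ (H:ℚ) := by exact_mod_cast coeff_le_height P 0
    have h3 : (0:ℚ) < ((P.coeff 0).natAbs : ℚ) := by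
      exact_mod_cast Int.natAbs_pos.mpr ha0
    have h4 : ((H:ℚ))⁻¹ ≤ ((P.coeff 0).natAbs : ℚ)⁻¹ := inv_anti₀ h3 h2
    have h5 : ((H:ℚ))⁻¹ ≤ padicNorm p (P.coeff 0 : ℚ) := le_trans h4 h1
    have h6 := (Rat.cast_le (K := ℝ)).mpr h5
    push_cast at h6
    exact h6
  set s : ℝ := |α - ξ| with hs
  by_cases hcase : 1 ≤ s
  · have h1 : (H:ℝ) ^ (-(d:ℝ)-1-2*ε) ≤ (H:ℝ) ^ (-1:ℝ) :=
      Real.rpow_le_rpow_of_exponent_le hHR1 (by nlinarith [Nat.cast_nonneg (α := ℝ) d])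
    calc (H:ℝ) ^ (-(d:ℝ)-1-2*ε) ≤ (H:ℝ) ^ (-1:ℝ) := h1
      _ = (H:ℝ)⁻¹ := Real.rpow_neg_one _
      _ ≤ (padicNorm p (P.coeff 0 : ℚ) : ℝ) := hlow
      _ ≤ m := hmin
      _ = 1 * m := (one_mul m).symm
      _ ≤ s * m := mul_le_mul_of_nonneg_right hcase hmin0
  · push_neg at hcase
    have hξM : |ξ| ≤ M := by
      have h1 : |ξ| ≤ |α| + |α - ξ| := by
        calc |ξ| = |α - (α - ξ)| := by ring_nf
          _ ≤ |α| + |α - ξ| := abs_sub _ _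
      rw [hMdef]; rw [hs] at hcase; linarith
    have hαM : |α| ≤ M := by rw [hMdef]; linarith
    have hPS : P ∉ S := by
      intro hmem
      have h1 : H ≤ S.sup intPolyHeight := Finset.le_sup (f := intPolyHeight) hmem
      have h2 : S.sup intPolyHeight + 1 ≤ H :=
        le_trans (le_trans (le_max_left _ _) (le_max_left _ _)) hHle
      omega
    have hSch := hS P hP0 hPdeg ha0 hPS
    have hev : |Polynomial.aeval α P| ≤ C * ((H:ℝ) * s) := by
      have h1 := eval_diff_bound P α ξ M hM1 hαM hξM d hPdeg
      rw [hroot, sub_zero] at h1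
      calc |Polynomial.aeval α P|
          ≤ ((d:ℝ)+1) * ((H:ℝ) * ((d:ℝ) * M ^ d * |α - ξ|)) := h1
        _ = C * ((H:ℝ) * s) := by rw [hCdef, hs]; ring
    have hCH : C ≤ (H:ℝ) ^ ε := by
      have h2 : (⌈C ^ (ε⁻¹)⌉₊ + 1 : ℕ) ≤ H := le_trans (le_max_right _ _) hHle
      have h1 : C ^ (ε⁻¹) ≤ (H:ℝ) := by
        calc C ^ (ε⁻¹) ≤ (⌈C ^ (ε⁻¹)⌉₊ : ℝ) := Nat.le_ceil _
          _ ≤ (H:ℝ) := by exact_mod_cast le_trans (Nat.le_succ _) h2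
      calc C = (C ^ (ε⁻¹)) ^ ε := by
            rw [← Real.rpow_mul hC0.le, inv_mul_cancel₀ hε.ne', Real.rpow_one]
        _ ≤ (H:ℝ) ^ ε := Real.rpow_le_rpow (Real.rpow_nonneg hC0.le _) h1 hε.le
    have key : (H:ℝ) ^ (-(d:ℝ)-ε) ≤ C * (H:ℝ) * (s * m) := by
      have hCHs0 : (0:ℝ) ≤ C * ((H:ℝ) * s) := by
        apply mul_nonneg hC0.le (mul_nonneg hHR0.le (abs_nonneg _))
      calc (H:ℝ) ^ (-(d:ℝ)-ε)
          ≤ |Polynomial.aeval α P| * (padicNorm p (P.coeff 0 : ℚ) : ℝ) := hSch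
        _ ≤ (C * ((H:ℝ) * s)) * m :=
            mul_le_mul hev hmin (by exact_mod_cast padicNorm.nonneg _) hCHs0
        _ = C * (H:ℝ) * (s * m) := by ring
    have hsm0 : (0:ℝ) ≤ s * m := mul_nonneg (abs_nonneg _) hmin0
    have hHe : (H:ℝ) ^ (-ε) ≤ C⁻¹ := by
      rw [Real.rpow_neg hHR0.le]
      exact inv_anti₀ hC0 hCH
    have hfac : (H:ℝ) * (H:ℝ) ^ (-1-ε) = (H:ℝ) ^ (-ε) := by
      have he : (-1-ε : ℝ) = (-1) + (-ε) := by ring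
      rw [he, Real.rpow_add hHR0, Real.rpow_neg_one]
      field_simp
    calc (H:ℝ) ^ (-(d:ℝ)-1-2*ε)
        = (H:ℝ) ^ (-(d:ℝ)-ε) * (H:ℝ) ^ (-1-ε) := by
          rw [← Real.rpow_add hHR0]; ring_nf
      _ ≤ (C * (H:ℝ) * (s * m)) * (H:ℝ) ^ (-1-ε) :=
          mul_le_mul_of_nonneg_right key (Real.rpow_nonneg hHR0.le _)
      _ = (s * m) * (C * ((H:ℝ) * (H:ℝ) ^ (-1-ε))) := by ring
      _ ≤ (s * m) * 1 := by
          apply mul_le_mul_of_nonneg_left _ hsm0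
          rw [hfac]
          calc C * (H:ℝ) ^ (-ε) ≤ C * C⁻¹ := mul_le_mul_of_nonneg_left hHe hC0.le
            _ = 1 := mul_inv_cancel₀ hC0.ne'
      _ = s * m := mul_one _
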